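/- Diagonal negativity: let h ∈ ℝ^d, let W ∈ ℝ^{C×d} with operator norm ≤ M, let y, c* be class indices, p the softmax of Wh with α := 1 − p_y ≥ α₀, suppose p_{c*} ≥ α₀ − ζ and Σ_{c∉{y,c*}} p_c ≤ ζ, and suppose ⟨ψ_ε(h), W_y − W_{c*}⟩ ≥ a₀·√d. Then ⟨ψ_ε(h), Wᵀ(p − e_y)⟩ ≤ −((α₀ − ζ)a₀ − 2ζM)·√d. -/

import Mathlib

private lemma abs_coord_le_norm' {n : ℕ} (u : EuclideanSpace ℝ (Fin n)) (c : Fin n) :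
    |u c| ≤ ‖u‖ := by
  rw [EuclideanSpace.norm_eq]
  calc |u c| = Real.sqrt (‖u c‖ ^ 2) := by
        rw [Real.sqrt_sq_eq_abs, abs_norm, Real.norm_eq_abs]
    _ ≤ Real.sqrt (∑ i, ‖u i‖ ^ 2) := by
        apply Real.sqrt_le_sqrt
        exact Finset.single_le_sum (fun i _ => sq_nonneg ‖u i‖) (Finset.mem_univ c)

theorem diagonal_negativity {C d : ℕ} (ε : ℝ) (hε : 0 < ε)
    (h ψ : EuclideanSpace ℝ (Fin d))
    (hψ : ∀ j, ψ j = h j / Real.sqrt ((h j) ^ 2 + ε ^ 2))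
    (W : EuclideanSpace ℝ (Fin d) →L[ℝ] EuclideanSpace ℝ (Fin C))
    (M : ℝ) (hW : ‖W‖ ≤ M)
    (y cstar : Fin C) (hyc : cstar ≠ y)
    (p : EuclideanSpace ℝ (Fin C))
    (hp : ∀ c, p c = Real.exp (W h c) / ∑ c', Real.exp (W h c'))
    (α₀ ζ a₀ : ℝ) (ha₀ : 0 ≤ a₀) (hζ : 0 ≤ ζ) (hζα : ζ ≤ α₀)
    (hα : α₀ ≤ 1 - p y)
    (hcs : α₀ - ζ ≤ p cstar)
    (hrest : ∑ c ∈ Finset.univ \ {y, cstar}, p c ≤ ζ)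
    (halign : a₀ * Real.sqrt d ≤
      (inner ℝ ψ ((ContinuousLinearMap.adjoint W) (EuclideanSpace.single y (1 : ℝ))
        - (ContinuousLinearMap.adjoint W) (EuclideanSpace.single cstar (1 : ℝ))) : ℝ)) :
    (inner ℝ ψ ((ContinuousLinearMap.adjoint W) (p - EuclideanSpace.single y (1 : ℝ))) : ℝ) ≤
      -((α₀ - ζ) * a₀ - 2 * ζ * M) * Real.sqrt d := by
  set u : EuclideanSpace ℝ (Fin C) := W ψ with hu
  -- rewrite inner products with adjoint
  have hadj : ∀ v : EuclideanSpace ℝ (Fin C),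
      (inner ℝ ψ ((ContinuousLinearMap.adjoint W) v) : ℝ) = ∑ c, u c * v c := by
    intro v
    rw [real_inner_comm, ContinuousLinearMap.adjoint_inner_left]
    simp [PiLp.inner_apply, RCLike.inner_apply, mul_comm, hu]
  -- norms
  have hM : 0 ≤ M := le_trans (norm_nonneg W) hW
  have hψnorm : ‖ψ‖ ≤ Real.sqrt d := by
    rw [EuclideanSpace.norm_eq]
    have hle : ∑ j, ‖ψ j‖ ^ 2 ≤ (d : ℝ) := by
      calc ∑ j, ‖ψ j‖ ^ 2 ≤ ∑ _j : Fin d, (1 : ℝ) := by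
            apply Finset.sum_le_sum
            intro j _
            have hden : 0 < Real.sqrt ((h j) ^ 2 + ε ^ 2) := by
              apply Real.sqrt_pos.2
              positivity
            have habs : |ψ j| ≤ 1 := by
              rw [hψ j, abs_div, abs_of_pos hden, div_le_one hden]
              calc |h j| = Real.sqrt ((h j) ^ 2) := (Real.sqrt_sq_eq_abs _).symm
                _ ≤ Real.sqrt ((h j) ^ 2 + ε ^ 2) := by
                    apply Real.sqrt_le_sqrt; nlinarith [sq_nonneg ε]
            calc ‖ψ j‖ ^ 2 = |ψ j| ^ 2 := by rw [Real.norm_eq_abs]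
              _ ≤ 1 ^ 2 := by apply pow_le_pow_left₀ (abs_nonneg _) habs
              _ = 1 := one_pow 2
        _ = (d : ℝ) := by simp
    exact Real.sqrt_le_sqrt hle
  have hunorm : ‖u‖ ≤ M * Real.sqrt d := by
    calc ‖u‖ ≤ ‖W‖ * ‖ψ‖ := W.le_opNorm ψ
      _ ≤ M * Real.sqrt d := by
          apply mul_le_mul hW hψnorm (norm_nonneg _) hM
  have hcoord : ∀ c, |u c| ≤ M * Real.sqrt d := fun c =>
    le_trans (abs_coord_le_norm' u c) hunorm
  -- p is nonneg and sums to 1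
  have hsumexp : 0 < ∑ c', Real.exp (W h c') := by
    apply Finset.sum_pos (fun c _ => Real.exp_pos _) ⟨y, Finset.mem_univ y⟩
  have hpnn : ∀ c, 0 ≤ p c := by
    intro c
    rw [hp c]
    positivity
  have hpsum : ∑ c, p c = 1 := by
    simp only [hp]
    rw [← Finset.sum_div, div_self (ne_of_gt hsumexp)]
  -- alignment: u y - u cstar ≥ a₀ √d
  have halign' : a₀ * Real.sqrt d ≤ u y - u cstar := by
    have := halign
    rw [← map_sub, hadj] at this
    calc a₀ * Real.sqrt d ≤ ∑ c, u c * (EuclideanSpace.single y (1:ℝ) -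
          EuclideanSpace.single cstar (1:ℝ)) c := this
      _ = u y - u cstar := by
          simp [PiLp.sub_apply, EuclideanSpace.single_apply, mul_sub, mul_ite,
            Finset.sum_sub_distrib, Finset.sum_ite_eq']
  -- main decomposition
  set S := (Finset.univ \ {y, cstar} : Finset (Fin C)) with hS
  have hmem : ({y, cstar} : Finset (Fin C)) ⊆ Finset.univ := Finset.subset_univ _
  have hsplit : ∑ c, u c * p c = u y * p y + u cstar * p cstar + ∑ c ∈ S, u c * p c := by
    rw [← Finset.sum_sdiff hmem, ← hS]
    have : ∑ c ∈ ({y, cstar} : Finset (Fin C)), u c * p c = u y * p y + u cstar * p cstar := by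
      rw [Finset.sum_pair (Ne.symm hyc)]
    rw [this]; ring
  have hpsplit : p y + p cstar + ∑ c ∈ S, p c = 1 := by
    rw [← hpsum, ← Finset.sum_sdiff hmem, ← hS, Finset.sum_pair (Ne.symm hyc)]
    ring
  -- LHS = ∑ u c p c - u y
  rw [hadj]
  have hLHS : ∑ c, u c * (p - EuclideanSpace.single y (1:ℝ)) c
      = -(u y - u cstar) * p cstar + ∑ c ∈ S, (u c - u y) * p c := by
    have h1 : ∑ c, u c * (p - EuclideanSpace.single y (1:ℝ)) c
        = (∑ c, u c * p c) - u y := by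
      simp [PiLp.sub_apply, EuclideanSpace.single_apply, mul_sub, mul_ite,
        Finset.sum_sub_distrib, Finset.sum_ite_eq']
    have h3 : ∑ c ∈ S, (u c - u y) * p c
        = ∑ c ∈ S, u c * p c - u y * ∑ c ∈ S, p c := by
      rw [Finset.mul_sum, ← Finset.sum_sub_distrib]
      exact Finset.sum_congr rfl (fun c _ => by ring)
    rw [h1, hsplit, h3, show p y = 1 - p cstar - ∑ c ∈ S, p c from by linarith]
    ring
  rw [hLHS]
  -- bounds
  have hb1 : -(u y - u cstar) * p cstar ≤ -((α₀ - ζ) * (a₀ * Real.sqrt d)) := by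
    have h1 : 0 ≤ a₀ * Real.sqrt d := by positivity
    have h2 : 0 ≤ α₀ - ζ := by linarith
    have h3 : (a₀ * Real.sqrt d) * (α₀ - ζ) ≤ (u y - u cstar) * p cstar :=
      mul_le_mul halign' hcs h2 (le_trans h1 halign')
    nlinarith
  have hb2 : ∑ c ∈ S, (u c - u y) * p c ≤ 2 * M * Real.sqrt d * ζ := by
    calc ∑ c ∈ S, (u c - u y) * p c ≤ ∑ c ∈ S, (2 * M * Real.sqrt d) * p c := by
          apply Finset.sum_le_sum
          intro c _
          apply mul_le_mul_of_nonneg_right _ (hpnn c)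
          have hc := hcoord c
          have hy := hcoord y
          have h1 := abs_le.1 hc
          have h2 := abs_le.1 hy
          linarith [h1.1, h1.2, h2.1, h2.2]
      _ = (2 * M * Real.sqrt d) * ∑ c ∈ S, p c := by rw [Finset.mul_sum]
      _ ≤ 2 * M * Real.sqrt d * ζ := by
          apply mul_le_mul_of_nonneg_left hrest
          positivity
  have hfin : -((α₀ - ζ) * (a₀ * Real.sqrt d)) + 2 * M * Real.sqrt d * ζ
      = -((α₀ - ζ) * a₀ - 2 * ζ * M) * Real.sqrt d := by ring
  linarith
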